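/- arXiv:1703.01573 — 4 statements merged into one kernel-verified Lean document; each statement's English description precedes it below -/
import Mathlib

section
/- For every c ≥ 1 and k ≥ 1 with 2^(1/k) - 1 < 1/(2c), for all sufficiently large n, ⌊2^((n+1)/k)⌋ ≤ (1/c) · Σ_{i=0}^{n} ⌊2^(i/k)⌋. -/
theorem monin_floor_block_bound (c k : ℕ) (hc : 1 ≤ c) (hk : 1 ≤ k)
    (h : (2 : ℝ) ^ ((1 : ℝ) / k) - 1 < 1 / (2 * c)) :
    ∃ N : ℕ, ∀ n ≥ N,
      (⌊(2 : ℝ) ^ (((n : ℝ) + 1) / k)⌋ : ℝ) ≤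
        (1 / c) * ∑ i ∈ Finset.range (n + 1), (⌊(2 : ℝ) ^ ((i : ℝ) / k)⌋ : ℝ) := by
  set q : ℝ := (2 : ℝ) ^ ((1 : ℝ) / k) with hqdef
  have hk0 : (0 : ℝ) < k := by exact_mod_cast hk.trans_lt' (by norm_num)
  have hc0 : (0 : ℝ) < c := by exact_mod_cast hc.trans_lt' (by norm_num)
  have hq1 : 1 < q := by
    apply Real.one_lt_rpow_iff_of_pos (by norm_num) |>.mpr
    exact Or.inl ⟨by norm_num, one_div_pos.mpr (by exact_mod_cast hk.trans_lt' (by norm_num))⟩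
  have hq0 : 0 < q := lt_trans one_pos hq1
  have key : ∀ i : ℕ, (2 : ℝ) ^ ((i : ℝ) / k) = q ^ i := by
    intro i
    rw [hqdef, ← Real.rpow_natCast ((2:ℝ) ^ ((1:ℝ)/k)) i,
      ← Real.rpow_mul (by norm_num : (0:ℝ) ≤ 2)]
    congr 1
    field_simp
  have hqinv0 : (0 : ℝ) ≤ q⁻¹ := by positivity
  have hqinv1 : q⁻¹ < 1 := inv_lt_one_of_one_lt₀ hq1
  -- eventually (n + 1 + 2c) * q⁻¹ ^ n < 1
  have htend : Filter.Tendsto (fun n : ℕ => ((n : ℝ) + 1 + 2 * c) * (q⁻¹) ^ n)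
      Filter.atTop (nhds 0) := by
    have h1 := tendsto_self_mul_const_pow_of_lt_one hqinv0 hqinv1
    have h2 := (tendsto_pow_atTop_nhds_zero_of_lt_one hqinv0 hqinv1).const_mul
      (1 + 2 * (c : ℝ))
    have := h1.add h2
    simp only [mul_zero, add_zero] at this
    convert this using 2 with n
    ring
  have hev : ∀ᶠ n : ℕ in Filter.atTop, ((n : ℝ) + 1 + 2 * c) * (q⁻¹) ^ n < 1 :=
    htend.eventually_lt_const (by norm_num)
  obtain ⟨N, hN⟩ := Filter.eventually_atTop.mp hev
  refine ⟨N, fun n hn => ?_⟩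
  have hpow : (n : ℝ) + 1 + 2 * c ≤ q ^ (n + 1) := by
    have h1 := hN n hn
    have hqn : (0 : ℝ) < q ^ n := by positivity
    rw [inv_pow, mul_inv_lt_iff₀ hqn, one_mul] at h1
    calc (n : ℝ) + 1 + 2 * c ≤ q ^ n := h1.le
      _ ≤ q ^ (n + 1) := pow_le_pow_right₀ hq1.le (Nat.le_succ n)
  -- rewrite the goal in terms of q
  have hcast : ((n : ℝ) + 1) / k = (((n + 1 : ℕ) : ℝ)) / k := by push_cast; ring
  rw [hcast, key (n + 1)]
  have hsum : ∀ i ∈ Finset.range (n + 1),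
      q ^ i - 1 ≤ (⌊(2 : ℝ) ^ ((i : ℝ) / k)⌋ : ℝ) := by
    intro i _
    rw [key i]
    exact (Int.sub_one_lt_floor _).le
  have hS : (q ^ (n + 1) - 1) / (q - 1) - (n + 1) ≤
      ∑ i ∈ Finset.range (n + 1), (⌊(2 : ℝ) ^ ((i : ℝ) / k)⌋ : ℝ) := by
    calc (q ^ (n + 1) - 1) / (q - 1) - (n + 1)
        = ∑ i ∈ Finset.range (n + 1), (q ^ i - 1) := by
          rw [Finset.sum_sub_distrib, geom_sum_eq hq1.ne' (n + 1)]
          simp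
      _ ≤ _ := Finset.sum_le_sum hsum
  rw [one_div, inv_mul_eq_div, le_div_iff₀ hc0]
  have hstep : (⌊q ^ (n + 1)⌋ : ℝ) * c ≤ q ^ (n + 1) * c :=
    mul_le_mul_of_nonneg_right (Int.floor_le _) hc0.le
  refine hstep.trans (le_trans ?_ hS)
  -- need: q^(n+1) * c ≤ (q^(n+1)-1)/(q-1) - (n+1)
  have hqs : 0 < q - 1 := by linarith
  have h2c : 2 * (c : ℝ) ≤ 1 / (q - 1) := by
    rw [le_div_iff₀ hqs]
    have h2c0 : (0 : ℝ) < 2 * c := by positivity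
    have := (lt_div_iff₀ h2c0).mp h
    nlinarith
  have hx1 : (1 : ℝ) ≤ q ^ (n + 1) := one_le_pow₀ hq1.le
  have hdiv : 2 * (c : ℝ) * (q ^ (n + 1) - 1) ≤ (q ^ (n + 1) - 1) / (q - 1) := by
    rw [div_eq_mul_one_div]
    have : (0:ℝ) ≤ q ^ (n+1) - 1 := by linarith
    nlinarith [mul_le_mul_of_nonneg_left h2c this]
  have hc1 : (1 : ℝ) ≤ c := by exact_mod_cast hc
  nlinarith [hpow, mul_le_mul_of_nonneg_left hpow hc0.le]
end

section
/- Let p be a prime and L a finite p-group. Then |L| ≤ p^r if and only if there exist elements x₁,...,x_r ∈ L such that every y ∈ L can be written as y = x₁^{a₁} · x₂^{a₂} · ... · x_r^{a_r} with 0 ≤ a_i < p for each i. -/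
universe u

theorem pGroup_aux (p : ℕ) (hp : p.Prime) (r : ℕ) :
    ∀ (L : Type u) [Group L] [Fintype L], IsPGroup p L → Fintype.card L ≤ p ^ r →
      ∃ x : Fin r → L, ∀ y : L, ∃ a : Fin r → ℕ,
        (∀ i, a i < p) ∧ y = (List.ofFn fun i => x i ^ a i).prod := by
  haveI : Fact p.Prime := ⟨hp⟩
  induction r with
  | zero =>
    intro L _ _ _hL hcard
    have hsub : Subsingleton L :=
      Fintype.card_le_one_iff_subsingleton.mp (by simpa using hcard)
    exact ⟨Fin.elim0, fun y => ⟨fun i => 0, fun i => i.elim0, Subsingleton.elim y _⟩⟩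
  | succ r ih =>
    intro L _ _ hL hcard
    by_cases hns : Nontrivial L
    case neg =>
      haveI : Subsingleton L := not_nontrivial_iff_subsingleton.mp hns
      exact ⟨fun _ => 1, fun y => ⟨fun _ => 0, fun _ => hp.pos, Subsingleton.elim _ _⟩⟩
    · -- find a central element of order p
      obtain ⟨z, hzc, hzp⟩ : ∃ z : L, z ∈ Subgroup.center L ∧ orderOf z = p := by
        haveI := IsPGroup.center_nontrivial hL
        have hc : IsPGroup p (Subgroup.center L) := hL.to_subgroup _
        obtain ⟨n, hn⟩ := IsPGroup.iff_card.mp hc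
        have hn1 : 1 ≤ n := by
          by_contra h
          interval_cases n
          · have : Nat.card (Subgroup.center L) = 1 := by simpa using hn
            exact (Finite.one_lt_card (α := Subgroup.center L)).ne' this
        have hdvd : p ∣ Nat.card (Subgroup.center L) :=
          hn ▸ dvd_pow_self p (by omega)
        obtain ⟨g, hg⟩ := exists_prime_orderOf_dvd_card' p hdvd
        exact ⟨(g : L), g.2, by rw [← Subgroup.orderOf_coe] at hg; exact hg⟩
      set N : Subgroup L := Subgroup.zpowers z with hN
      haveI hNnormal : N.Normal := by
        constructor
        intro n hn g
        have : g * n * g⁻¹ = n := by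
          obtain ⟨k, rfl⟩ := Subgroup.mem_zpowers_iff.mp hn
          have hz' : ∀ w : L, z * w = w * z := fun w =>
            (Subgroup.mem_center_iff.mp hzc w).symm
          have : g * z ^ k = z ^ k * g := (Commute.zpow_right (hz' g).symm k)
          rw [this]; group
        rwa [this]
      haveI : Fintype (L ⧸ N) := Fintype.ofFinite _
      have hNcard : Nat.card N = p := by
        rw [hN, Nat.card_zpowers, hzp]
      have hcardQ : Fintype.card (L ⧸ N) ≤ p ^ r := by
        have h1 : Nat.card L = Nat.card (L ⧸ N) * Nat.card N :=
          Subgroup.card_eq_card_quotient_mul_card_subgroup N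
        rw [hNcard] at h1
        have h2 : Nat.card (L ⧸ N) * p ≤ p ^ r * p := by
          rw [← h1, ← pow_succ]
          simpa [Nat.card_eq_fintype_card] using hcard
        have hp0 : 0 < p := hp.pos
        have := Nat.le_of_mul_le_mul_right h2 hp0
        simpa [Nat.card_eq_fintype_card] using this
      obtain ⟨xq, hxq⟩ := ih (L ⧸ N) (hL.to_quotient N) hcardQ
      -- lift each generator
      set x : Fin r → L := fun i => Quotient.out (xq i) with hx
      have hmk : ∀ i, (x i : L ⧸ N) = xq i := fun i => QuotientGroup.out_eq' (xq i)
      refine ⟨(Fin.snoc x z : Fin (r + 1) → L), fun y => ?_⟩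
      obtain ⟨a, ha, hay⟩ := hxq (y : L ⧸ N)
      set w : L := (List.ofFn fun i => x i ^ a i).prod with hw
      have hwq : (w : L ⧸ N) = (y : L ⧸ N) := by
        rw [hay, hw]
        have := map_list_prod (QuotientGroup.mk' N) (List.ofFn fun i => x i ^ a i)
        simp only [QuotientGroup.mk'_apply] at this
        rw [this, List.map_ofFn]
        exact congrArg List.prod (congrArg List.ofFn (funext fun i => by
          simp [Function.comp, hmk]))
      have hmem : w⁻¹ * y ∈ N := QuotientGroup.eq.mp hwq
      obtain ⟨k, hk⟩ := Subgroup.mem_zpowers_iff.mp hmem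
      have hy : y = w * z ^ k := by
        rw [hk]; group
      -- reduce k mod p
      have hnonneg : (0 : ℤ) ≤ k % (p : ℤ) :=
        Int.emod_nonneg k (by exact_mod_cast hp.ne_zero)
      have hzk : z ^ k = z ^ (k % (p : ℤ)).toNat := by
        have hk' : k % (p : ℤ) + (p : ℤ) * (k / p) = k := Int.emod_add_mul_ediv k p
        have hzp1 : z ^ (p : ℤ) = 1 := by
          rw [zpow_natCast, ← hzp, pow_orderOf_eq_one]
        calc z ^ k = z ^ (k % (p : ℤ) + (p : ℤ) * (k / p)) := by rw [hk']
          _ = z ^ (k % (p : ℤ)) * (z ^ (p : ℤ)) ^ (k / p) := by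
              rw [zpow_add, zpow_mul]
          _ = z ^ (k % (p : ℤ)) := by rw [hzp1]; simp
          _ = z ^ (k % (p : ℤ)).toNat := by
              rw [← zpow_natCast, Int.toNat_of_nonneg hnonneg]
      set c : ℕ := (k % (p : ℤ)).toNat with hc
      have hclt : c < p := by
        have h1 : k % (p : ℤ) < p := Int.emod_lt_of_pos k (by exact_mod_cast hp.pos)
        rw [hc]
        omega
      refine ⟨(Fin.snoc a c : Fin (r + 1) → ℕ), fun i => ?_, ?_⟩
      · refine Fin.lastCases ?_ (fun j => ?_) i
        · simpa using hclt
        · simpa using ha j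
      · rw [List.ofFn_succ']
        have heq : (List.ofFn fun i : Fin r =>
            (Fin.snoc x z : Fin (r + 1) → L) (Fin.castSucc i) ^ (Fin.snoc a c : Fin (r + 1) → ℕ) (Fin.castSucc i)) =
            (List.ofFn fun i : Fin r => x i ^ a i) := by
          congr 1
          ext i
          simp
        rw [List.prod_concat, heq]
        simp only [Fin.snoc_last]
        rw [← hw, ← hzk, ← hy]

theorem pGroup_card_le_iff_generators (p : ℕ) (hp : p.Prime)
    (L : Type*) [Group L] [Fintype L] (hL : IsPGroup p L) (r : ℕ) :
    Fintype.card L ≤ p ^ r ↔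
      ∃ x : Fin r → L, ∀ y : L, ∃ a : Fin r → ℕ,
        (∀ i, a i < p) ∧ y = (List.ofFn fun i => x i ^ a i).prod := by
  constructor
  · exact fun h => pGroup_aux p hp r L hL h
  · rintro ⟨x, hx⟩
    have hsurj : Function.Surjective
        (fun a : Fin r → Fin p => (List.ofFn fun i => x i ^ (a i : ℕ)).prod) := by
      intro y
      obtain ⟨a, ha, hay⟩ := hx y
      exact ⟨fun i => ⟨a i, ha i⟩, hay.symm⟩
    calc Fintype.card L ≤ Fintype.card (Fin r → Fin p) :=
          Fintype.card_le_of_surjective _ hsurj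
      _ = p ^ r := by simp
end

section
/- Every finitely generated profinite group is Hopfian: if G is a profinite group that is topologically finitely generated, then every continuous surjective group homomorphism α : G → G is injective (hence an isomorphism of topological groups). -/
section Aux

/-- `Equiv.permCongr` as a monoid hom. -/
def permCongrMonoidHom {α β : Type*} (e : α ≃ β) : Equiv.Perm α →* Equiv.Perm β where
  toFun := e.permCongr
  map_one' := by ext x; simp
  map_mul' p q := by ext x; simp [Equiv.Perm.mul_apply]

variable {G : Type*} [Group G] [TopologicalSpace G] [IsTopologicalGroup G]

lemma stabilizerSubgroup_isOpen (H : Subgroup G) (hH : IsOpen (H : Set G)) (q : G ⧸ H) :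
    IsOpen ((MulAction.stabilizer G q : Subgroup G) : Set G) := by
  obtain ⟨a, rfl⟩ := QuotientGroup.mk_surjective q
  have hset : ((MulAction.stabilizer G ((a : G ⧸ H)) : Subgroup G) : Set G)
      = (fun g => a⁻¹ * g * a) ⁻¹' (H : Set G) := by
    ext g
    simp only [Set.mem_preimage, SetLike.mem_coe, MulAction.mem_stabilizer_iff]
    rw [show g • ((a : G ⧸ H)) = ((g * a : G) : G ⧸ H) from rfl, QuotientGroup.eq]
    have h1 : (g * a)⁻¹ * a = (a⁻¹ * g * a)⁻¹ := by group
    rw [h1, H.inv_mem_iff]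
  rw [hset]
  exact hH.preimage (by fun_prop)

lemma ker_toPermHom_isOpen [CompactSpace G] (H : Subgroup G) (hH : IsOpen (H : Set G)) :
    IsOpen (((MulAction.toPermHom G (G ⧸ H)).ker : Subgroup G) : Set G) := by
  have : Finite (G ⧸ H) := H.quotient_finite_of_isOpen hH
  have hset : (((MulAction.toPermHom G (G ⧸ H)).ker : Subgroup G) : Set G)
      = ⋂ q : G ⧸ H, ((MulAction.stabilizer G q : Subgroup G) : Set G) := by
    ext g
    simp only [SetLike.mem_coe, MonoidHom.mem_ker, Set.mem_iInter,
      MulAction.mem_stabilizer_iff, Equiv.ext_iff, MulAction.toPermHom_apply,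
      MulAction.toPerm_apply, Equiv.Perm.coe_one, id_eq]
  rw [hset]
  exact isOpen_iInter_of_finite fun q => stabilizerSubgroup_isOpen H hH q

/-- An open subgroup containing a dense subgroup is everything. -/
lemma eq_top_of_isOpen_of_dense {K : Subgroup G} (hK : IsOpen (K : Set G))
    {D : Subgroup G} (hD : closure (D : Set G) = Set.univ) (hle : D ≤ K) : K = ⊤ := by
  have hclosed : IsClosed (K : Set G) := K.isClosed_of_isOpen hK
  have : (K : Set G) = Set.univ := by
    apply Set.eq_univ_of_univ_subset
    rw [← hD]
    exact hclosed.closure_subset_iff.mpr hle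
  exact SetLike.ext' this

lemma finite_open_subgroups_of_index [CompactSpace G]
    (S : Finset G) (hS : closure ((Subgroup.closure (S : Set G) : Subgroup G) : Set G) = Set.univ)
    (n : ℕ) : Set.Finite {H : Subgroup G | IsOpen (H : Set G) ∧ H.index = n} := by
  classical
  set U := {H : Subgroup G | IsOpen (H : Set G) ∧ H.index = n} with hUdef
  rw [← Set.finite_coe_iff]
  -- for each `H ∈ U` choose an equivalence `G ⧸ H ≃ Fin n`
  let e : ∀ H : U, (G ⧸ (H : Subgroup G)) ≃ Fin n := fun H =>
    have : Finite (G ⧸ (H : Subgroup G)) :=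
      Subgroup.quotient_finite_of_isOpen _ H.2.1
    Finite.equivFinOfCardEq (by rw [← Subgroup.index_eq_card]; exact H.2.2)
  let ψ : ∀ H : U, G →* Equiv.Perm (Fin n) := fun H =>
    (permCongrMonoidHom (e H)).comp (MulAction.toPermHom G (G ⧸ (H : Subgroup G)))
  have hψ_apply : ∀ (H : U) (g : G) (x : G ⧸ (H : Subgroup G)),
      ψ H g (e H x) = e H (g • x) := by
    intro H g x
    simp [ψ, permCongrMonoidHom, Equiv.permCongr_apply]
  have hmem : ∀ (H : U) (g : G),
      g ∈ (H : Subgroup G) ↔ ψ H g (e H (((1 : G) : G ⧸ (H : Subgroup G)))) =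
        e H (((1 : G) : G ⧸ (H : Subgroup G))) := by
    intro H g
    rw [hψ_apply, EmbeddingLike.apply_eq_iff_eq, ← MulAction.mem_stabilizer_iff,
      MulAction.stabilizer_quotient]
  have hker : ∀ H : U, IsOpen (((ψ H).ker : Subgroup G) : Set G) := by
    intro H
    refine Subgroup.isOpen_mono ?_ (ker_toPermHom_isOpen _ H.2.1)
    intro x hx
    rw [MonoidHom.mem_ker] at hx ⊢
    simp [ψ, hx]
  -- the injection
  let F : U → (↥S → Equiv.Perm (Fin n)) × Fin n := fun H =>
    (fun s => ψ H (s : G), e H (((1 : G) : G ⧸ (H : Subgroup G))))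
  have hFinj : Function.Injective F := by
    intro H K hHK
    have h1 : (fun s : ↥S => ψ H (s : G)) = fun s : ↥S => ψ K (s : G) :=
      congrArg Prod.fst hHK
    have h2 : e H (((1 : G) : G ⧸ (H : Subgroup G)))
        = e K (((1 : G) : G ⧸ (K : Subgroup G))) := congrArg Prod.snd hHK
    have heq : ψ H = ψ K := by
      have hSle : Subgroup.closure (S : Set G) ≤ MonoidHom.eqLocus (ψ H) (ψ K) := by
        apply (Subgroup.closure_le _).2
        intro s hs
        exact congrFun h1 ⟨s, Finset.mem_coe.mp hs⟩
      have hopen : IsOpen ((MonoidHom.eqLocus (ψ H) (ψ K) : Subgroup G) : Set G) := by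
        refine Subgroup.isOpen_mono (H₁ := (ψ H).ker ⊓ (ψ K).ker) ?_ ?_
        · intro x hx
          have hx1 : ψ H x = 1 := hx.1
          have hx2 : ψ K x = 1 := hx.2
          show ψ H x = ψ K x
          rw [hx1, hx2]
        · rw [Subgroup.coe_inf]
          exact (hker H).inter (hker K)
      have htop : MonoidHom.eqLocus (ψ H) (ψ K) = ⊤ :=
        eq_top_of_isOpen_of_dense hopen hS hSle
      ext g x
      have : g ∈ MonoidHom.eqLocus (ψ H) (ψ K) := htop ▸ Subgroup.mem_top g
      rw [show ψ H g = ψ K g from this]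
    apply Subtype.ext
    ext g
    rw [hmem H g, hmem K g, heq, h2]
  exact Finite.of_injective F hFinj

end Aux

theorem profinite_fg_hopfian (G : Type*) [Group G] [TopologicalSpace G]
    [IsTopologicalGroup G] [CompactSpace G] [TotallyDisconnectedSpace G] [T2Space G]
    (hfg : ∃ S : Finset G, closure ((Subgroup.closure (S : Set G) : Subgroup G) : Set G) = Set.univ)
    (α : G →* G) (hcont : Continuous α) (hsurj : Function.Surjective α) :
    Function.Injective α := by
  obtain ⟨S, hS⟩ := hfg
  rw [← MonoidHom.ker_eq_bot_iff]
  -- the kernel is contained in every open subgroup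
  have key : ∀ K : Subgroup G, IsOpen (K : Set G) → α.ker ≤ K := by
    intro K hK
    set n := K.index with hn
    set U := {H : Subgroup G | IsOpen (H : Set G) ∧ H.index = n} with hUdef
    have hfin : U.Finite := finite_open_subgroups_of_index S hS n
    have : Finite U := hfin.to_subtype
    have hKU : K ∈ U := ⟨hK, rfl⟩
    let Φ : U → U := fun H =>
      ⟨(H : Subgroup G).comap α, by
        constructor
        · rw [Subgroup.coe_comap]
          exact H.2.1.preimage hcont
        · rw [Subgroup.index_comap_of_surjective _ hsurj]
          exact H.2.2⟩
    have hΦinj : Function.Injective Φ := by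
      intro H₁ H₂ h
      have := congrArg (fun H : U => Subgroup.map α (H : Subgroup G)) h
      simp only [Φ, Subgroup.map_comap_eq_self_of_surjective hsurj] at this
      exact Subtype.ext this
    have hΦsurj : Function.Surjective Φ := Finite.injective_iff_surjective.mp hΦinj
    obtain ⟨H, hH⟩ := hΦsurj ⟨K, hKU⟩
    have hcomap : (H : Subgroup G).comap α = K := congrArg Subtype.val hH
    intro g hg
    rw [← hcomap, Subgroup.mem_comap]
    rw [MonoidHom.mem_ker] at hg
    rw [hg]
    exact Subgroup.one_mem _
  -- conclude using that open subgroups separate points from 1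
  rw [eq_bot_iff]
  intro g hg
  rw [Subgroup.mem_bot]
  by_contra hne
  have : TotallySeparatedSpace G := loc_compact_t2_tot_disc_iff_tot_sep.mp inferInstance
  obtain ⟨W, hW, h1W, hgW⟩ :=
    exists_isClopen_of_totally_separated (i := (1 : G)) (j := g) (fun h => hne h.symm)
  obtain ⟨H, hHW⟩ := IsTopologicalGroup.exist_openSubgroup_sub_clopen_nhds_of_one hW h1W
  exact hgW (hHW (key H.toSubgroup H.isOpen hg))
end

section
/- A small residually finite group is Hopfian: if G is a group with only finitely many subgroups of each finite index, and G is residually finite, then every surjective endomorphism α : G → G is an isomorphism. -/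
theorem small_residually_finite_hopfian (G : Type*) [Group G]
    (hsmall : ∀ n : ℕ, {H : Subgroup G | H.index = n}.Finite)
    (hrf : ∀ g : G, g ≠ 1 → ∃ H : Subgroup G, H.index ≠ 0 ∧ g ∉ H)
    (α : G →* G) (hsurj : Function.Surjective α) :
    Function.Bijective α := by
  refine ⟨?_, hsurj⟩
  intro a b hab
  have key : ∀ g : G, α g = 1 → g = 1 := by
    intro g hg
    by_contra hg1
    obtain ⟨H, hHidx, hgH⟩ := hrf g hg1
    have hfin := hsmall H.index
    haveI : Finite {K : Subgroup G // K.index = H.index} := hfin.to_subtype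
    let f : {K : Subgroup G // K.index = H.index} → {K : Subgroup G // K.index = H.index} :=
      fun K => ⟨K.1.comap α, by
        rw [Subgroup.index_comap_of_surjective _ hsurj]; exact K.2⟩
    have hinj : Function.Injective f := fun K1 K2 h =>
      Subtype.ext (Subgroup.comap_injective hsurj (congrArg Subtype.val h))
    obtain ⟨K, hK⟩ := Finite.surjective_of_injective hinj ⟨H, rfl⟩
    have hKH : K.1.comap α = H := congrArg Subtype.val hK
    apply hgH
    rw [← hKH]
    simp only [Subgroup.mem_comap, hg]
    exact K.1.one_mem
  have : α (a * b⁻¹) = 1 := by simp [hab]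
  have := key _ this
  group at this
  exact mul_inv_eq_one.mp (by simpa using this)
end
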